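/- Let X be a random variable with finite second moment whose mean μ = E(X) is also a median of X (that is, P(X ≥ μ) ≥ 1/2 and P(X ≤ μ) ≥ 1/2). Then E(X | X ≥ μ) ≤ μ + √Var(X). -/

import Mathlib

open MeasureTheory

/-- If `X` has finite second moment and its mean `μ = E(X)` is also a median
(`P(X ≥ μ) ≥ 1/2` and `P(X ≤ μ) ≥ 1/2`), then the tail conditional expectation
satisfies `E(X | X ≥ μ) ≤ μ + √Var(X)`. -/
theorem tce_le_mean_add_sqrt_var {Ω : Type*} [MeasurableSpace Ω]
    (μ : Measure Ω) [IsProbabilityMeasure μ] (X : Ω → ℝ)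
    (hX : MemLp X 2 μ)
    (hmed1 : (1 : ENNReal) / 2 ≤ μ {ω | (∫ ω', X ω' ∂μ) ≤ X ω})
    (hmed2 : (1 : ENNReal) / 2 ≤ μ {ω | X ω ≤ ∫ ω', X ω' ∂μ}) :
    (∫ ω in {ω | (∫ ω', X ω' ∂μ) ≤ X ω}, X ω ∂μ) /
        (μ {ω | (∫ ω', X ω' ∂μ) ≤ X ω}).toReal
      ≤ (∫ ω', X ω' ∂μ) + Real.sqrt (ProbabilityTheory.variance X μ) := by
  set m : ℝ := ∫ ω', X ω' ∂μ with hm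
  obtain ⟨Y, hYsm, hXY⟩ := hX.aestronglyMeasurable
  have hY2 : MemLp Y 2 μ := hX.ae_eq hXY
  have hYint : Integrable Y μ := hY2.integrable (by norm_num)
  have hmY : m = ∫ ω', Y ω' ∂μ := integral_congr_ae hXY
  set A : Set Ω := {ω | m ≤ X ω} with hA
  set A' : Set Ω := {ω | m ≤ Y ω} with hA'
  have hA'meas : MeasurableSet A' := hYsm.measurable measurableSet_Ici
  have hAE : A =ᵐ[μ] A' := by
    filter_upwards [hXY] with ω hω
    exact congrArg (fun t => m ≤ t) hω
  have hμA : μ A = μ A' := measure_congr hAE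
  have hIA : (∫ ω in A, X ω ∂μ) = ∫ ω in A', Y ω ∂μ := by
    rw [setIntegral_congr_set hAE]
    exact integral_congr_ae (ae_restrict_of_ae hXY)
  -- p and its bounds
  set p : ℝ := (μ A).toReal with hp
  have hμA1 : μ A ≤ 1 := prob_le_one
  have hμAne : μ A ≠ ⊤ := (lt_of_le_of_lt hμA1 ENNReal.one_lt_top).ne
  have hphalf : (1:ℝ)/2 ≤ p := by
    have := ENNReal.toReal_mono hμAne hmed1
    simpa using this
  have hppos : 0 < p := by linarith
  -- Z = Y - m
  set Z : Ω → ℝ := fun ω => Y ω - m with hZ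
  have hZ2 : MemLp Z 2 μ := hY2.sub (memLp_const m)
  have hZint : Integrable Z μ := hZ2.integrable (by norm_num)
  have hZabs : Integrable (fun ω => |Z ω|) μ := hZint.abs
  have hZmean : (∫ ω, Z ω ∂μ) = 0 := by
    simp [hZ, integral_sub hYint (integrable_const m), ← hmY]
  -- variance = ∫ Z^2
  have hvar : ProbabilityTheory.variance X μ = ∫ ω, Z ω ^ 2 ∂μ := by
    rw [ProbabilityTheory.variance_eq_integral hX.aestronglyMeasurable.aemeasurable]
    refine integral_congr_ae ?_
    filter_upwards [hXY] with ω hω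
    simp [hZ, hω, ← hm]
  have hvar_nonneg : 0 ≤ ∫ ω, Z ω ^ 2 ∂μ :=
    integral_nonneg fun ω => sq_nonneg _
  -- E|Z| ≤ √(∫ Z²)
  have habs2 : MemLp (fun ω => |Z ω|) 2 μ := hZ2.abs
  have hEabs_nonneg : 0 ≤ ∫ ω, |Z ω| ∂μ := integral_nonneg fun ω => abs_nonneg _
  have hEabs_sq : (∫ ω, |Z ω| ∂μ) ^ 2 ≤ ∫ ω, Z ω ^ 2 ∂μ := by
    have h := ProbabilityTheory.variance_nonneg (fun ω => |Z ω|) μ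
    rw [ProbabilityTheory.variance_eq_sub habs2] at h
    simp only [Pi.pow_apply] at h
    have : (∫ ω, |Z ω| ^ 2 ∂μ) = ∫ ω, Z ω ^ 2 ∂μ := by
      refine integral_congr_ae (ae_of_all _ fun ω => ?_)
      simp [sq_abs]
    nlinarith [h, this]
  have hEabs_le : (∫ ω, |Z ω| ∂μ) ≤ Real.sqrt (∫ ω, Z ω ^ 2 ∂μ) := by
    rw [← Real.sqrt_sq hEabs_nonneg]
    exact Real.sqrt_le_sqrt hEabs_sq
  set σ : ℝ := Real.sqrt (ProbabilityTheory.variance X μ) with hσ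
  have hσ_nonneg : 0 ≤ σ := Real.sqrt_nonneg _
  have hEabs_le' : (∫ ω, |Z ω| ∂μ) ≤ σ := by rw [hσ, hvar]; exact hEabs_le
  -- T = ∫_{A'} Z
  set T : ℝ := ∫ ω in A', Z ω ∂μ with hT
  have hTnonneg : 0 ≤ T := by
    refine setIntegral_nonneg hA'meas fun ω hω => ?_
    simp only [hA', Set.mem_setOf_eq] at hω
    simp [hZ]; linarith
  -- T ≤ ∫ max Z 0 = E|Z|/2
  have hpos_int : Integrable (fun ω => max (Z ω) 0) μ := hZint.pos_part
  have hTle : T ≤ ∫ ω, max (Z ω) 0 ∂μ := by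
    have h1 : T = ∫ ω in A', max (Z ω) 0 ∂μ := by
      refine setIntegral_congr_fun hA'meas fun ω hω => ?_
      simp only [hA', Set.mem_setOf_eq] at hω
      have : 0 ≤ Z ω := by simp [hZ]; linarith
      simp [max_eq_left this]
    rw [h1]
    exact setIntegral_le_integral hpos_int (ae_of_all _ fun ω => le_max_right _ _)
  have hmax_eq : (∫ ω, max (Z ω) 0 ∂μ) = (∫ ω, |Z ω| ∂μ) / 2 := by
    have : ∀ ω, max (Z ω) 0 = (Z ω + |Z ω|) / 2 := by
      intro ω
      rcases le_total (Z ω) 0 with h | h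
      · rw [max_eq_right h, abs_of_nonpos h]; ring
      · rw [max_eq_left h, abs_of_nonneg h]; ring
    rw [integral_congr_ae (ae_of_all _ this)]
    rw [integral_div, integral_add hZint hZabs, hZmean]
    ring
  have hTle' : T ≤ σ / 2 := by
    calc T ≤ ∫ ω, max (Z ω) 0 ∂μ := hTle
    _ = (∫ ω, |Z ω| ∂μ) / 2 := hmax_eq
    _ ≤ σ / 2 := by linarith
  -- ∫_{A'} Y = m * p + T
  have hsplit : (∫ ω in A', Y ω ∂μ) = m * p + T := by
    have : ∀ ω, Y ω = m + Z ω := fun ω => by simp [hZ]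
    rw [integral_congr_ae (ae_restrict_of_ae (ae_of_all _ this)),
      integral_add (integrable_const m).restrict (hZint.restrict),
      setIntegral_const]
    rw [hp, hμA]
    ring_nf
    simp [mul_comm, measureReal_def, hT]
  -- conclude
  have hfinal : (∫ ω in A, X ω ∂μ) / p ≤ m + σ := by
    rw [hIA, hsplit]
    rw [div_le_iff₀ hppos]
    have : T ≤ σ * p := by nlinarith
    nlinarith
  exact hfinal
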